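/- Let U : ℝ → ℝ be C¹, 2π-periodic, with U(ϑ) ≥ U_min > 0 for all ϑ, and let α ∈ (0,2). Consider a solution (ϑ(τ), φ(τ)) of the planar system ϑ' = 2U(ϑ) sin(φ−ϑ), φ' = U'(ϑ)cos(φ−ϑ) + αU(ϑ) sin(φ−ϑ). Then the function v(τ) = √(U(ϑ(τ))) cos(φ(τ)−ϑ(τ)) satisfies v'(τ) = (2−α) √(U(ϑ(τ))) (U(ϑ(τ)) − v(τ)²); in particular v is nondecreasing along solutions (since v² ≤ U(ϑ) always). -/

import Mathlib

theorem stmt_10 (α Umin : ℝ) (hα : α ∈ Set.Ioo (0 : ℝ) 2) (hUmin : 0 < Umin)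
    (U : ℝ → ℝ) (hU : ContDiff ℝ 1 U) (hper : Function.Periodic U (2 * Real.pi))
    (hUb : ∀ ϑ, Umin ≤ U ϑ)
    (θ φ : ℝ → ℝ)
    (hθ : ∀ τ, HasDerivAt θ (2 * U (θ τ) * Real.sin (φ τ - θ τ)) τ)
    (hφ : ∀ τ, HasDerivAt φ
      (deriv U (θ τ) * Real.cos (φ τ - θ τ) + α * U (θ τ) * Real.sin (φ τ - θ τ)) τ) :
    (∀ τ, HasDerivAt (fun τ => Real.sqrt (U (θ τ)) * Real.cos (φ τ - θ τ))
      ((2 - α) * Real.sqrt (U (θ τ)) *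
        (U (θ τ) - (Real.sqrt (U (θ τ)) * Real.cos (φ τ - θ τ)) ^ 2)) τ) ∧
    Monotone (fun τ => Real.sqrt (U (θ τ)) * Real.cos (φ τ - θ τ)) := by
  have hUpos : ∀ x, 0 < U x := fun x => lt_of_lt_of_le hUmin (hUb x)
  have hUdiff : Differentiable ℝ U := hU.differentiable one_ne_zero
  have key : ∀ τ, HasDerivAt (fun τ => Real.sqrt (U (θ τ)) * Real.cos (φ τ - θ τ))
      ((2 - α) * Real.sqrt (U (θ τ)) *
        (U (θ τ) - (Real.sqrt (U (θ τ)) * Real.cos (φ τ - θ τ)) ^ 2)) τ := by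
    intro τ
    set s := Real.sqrt (U (θ τ)) with hs
    have hspos : 0 < s := Real.sqrt_pos.mpr (hUpos _)
    have hs2 : s ^ 2 = U (θ τ) := Real.sq_sqrt (hUpos _).le
    set dU := deriv U (θ τ)
    set si := Real.sin (φ τ - θ τ)
    set co := Real.cos (φ τ - θ τ)
    have hUθ : HasDerivAt (fun τ => U (θ τ)) (dU * (2 * U (θ τ) * si)) τ :=
      ((hUdiff (θ τ)).hasDerivAt).comp τ (hθ τ)
    have hsq : HasDerivAt (fun τ => Real.sqrt (U (θ τ)))
        (1 / (2 * s) * (dU * (2 * U (θ τ) * si))) τ := by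
      have := (Real.hasDerivAt_sqrt (ne_of_gt (hUpos (θ τ)))).comp τ hUθ
      exact this
    have hdiffang : HasDerivAt (fun τ => φ τ - θ τ)
        ((dU * co + α * U (θ τ) * si) - 2 * U (θ τ) * si) τ := (hφ τ).sub (hθ τ)
    have hcos : HasDerivAt (fun τ => Real.cos (φ τ - θ τ))
        (-si * ((dU * co + α * U (θ τ) * si) - 2 * U (θ τ) * si)) τ := by
      have := (Real.hasDerivAt_cos (φ τ - θ τ)).comp τ hdiffang
      exact this
    have hmul := hsq.mul hcos
    refine hmul.congr_deriv ?_
    have hU' : U (θ τ) = s ^ 2 := hs2.symm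
    have hsin2 : si ^ 2 = 1 - co ^ 2 := by
      have := Real.sin_sq_add_cos_sq (φ τ - θ τ); nlinarith
    have hco : Real.cos (φ τ - θ τ) = co := rfl
    rw [← hs, hU', hco]
    field_simp
    linear_combination ((2 - α) * s ^ 2) * hsin2
  refine ⟨key, ?_⟩
  have hdiff : Differentiable ℝ (fun τ => Real.sqrt (U (θ τ)) * Real.cos (φ τ - θ τ)) :=
    fun τ => (key τ).differentiableAt
  apply monotone_of_deriv_nonneg hdiff
  intro τ
  rw [(key τ).deriv]
  have hspos : (0:ℝ) < Real.sqrt (U (θ τ)) := Real.sqrt_pos.mpr (hUpos _)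
  have hs2 : Real.sqrt (U (θ τ)) ^ 2 = U (θ τ) := Real.sq_sqrt (hUpos _).le
  have hc : Real.cos (φ τ - θ τ) ^ 2 ≤ 1 := by
    nlinarith [Real.sin_sq_add_cos_sq (φ τ - θ τ), sq_nonneg (Real.sin (φ τ - θ τ))]
  have h1 : (Real.sqrt (U (θ τ)) * Real.cos (φ τ - θ τ)) ^ 2 ≤ U (θ τ) := by
    nlinarith
  have h2 : (0:ℝ) ≤ 2 - α := by linarith [hα.2]
  exact mul_nonneg (mul_nonneg h2 hspos.le) (sub_nonneg.mpr h1)
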